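/- Let H be Hermitian on a finite-dimensional space with nondegenerate spectrum, |Ψ₀⟩ a unit vector, ρ_d = Σ_E |⟨E|Ψ₀⟩|²|E⟩⟨E|, and V any operator. Then the infinite-time average of |⟨Ψ(t)|V|Ψ(t)⟩|², where |Ψ(t)⟩ = e^{-iHt}|Ψ₀⟩, under the second no-resonance condition equals |tr(ρ_d V)|² + tr(ρ_d V ρ_d V†) − Σ_E |⟨E|V|E⟩|² |⟨E|Ψ₀⟩|⁴. -/

import Mathlib

open Filter
open scoped BigOperators ComplexConjugate

/-- The `k`-th no-resonance condition for eigenvalues `E : Fin D → ℝ`. -/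
def NoResonance {D : ℕ} (E : Fin D → ℝ) (k : ℕ) : Prop :=
  ∀ α β : Fin k → Fin D,
    (∑ i, E (α i)) = (∑ i, E (β i)) →
    Multiset.map α Finset.univ.val = Multiset.map β Finset.univ.val

/-- `HasTimeAvg f L` : the infinite-time average `lim_{T→∞} (1/T)∫_0^T f(t) dt` equals `L`. -/
def HasTimeAvg (f : ℝ → ℝ) (L : ℝ) : Prop :=
  Tendsto (fun T : ℝ => (1 / T) * ∫ t in (0:ℝ)..T, f t) atTop (nhds L)

section Aux

lemma avg_exp (ω : ℝ) (c : ℂ) :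
    HasTimeAvg (fun t => (c * Complex.exp (Complex.I * ω * t)).re)
      (if ω = 0 then c.re else 0) := by
  by_cases h : ω = 0
  · subst h
    simp only [if_pos rfl, Complex.ofReal_zero, mul_zero, zero_mul, Complex.exp_zero, mul_one]
    unfold HasTimeAvg
    have : ∀ T : ℝ, T ≠ 0 → (1 / T) * ∫ _t in (0:ℝ)..T, c.re = c.re := by
      intro T hT
      rw [intervalIntegral.integral_const, smul_eq_mul, sub_zero]
      field_simp
    refine Tendsto.congr' ?_ tendsto_const_nhds
    filter_upwards [eventually_gt_atTop (0:ℝ)] with T hT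
    exact (this T hT.ne').symm
  · rw [if_neg h]
    have hiw : Complex.I * (ω:ℂ) ≠ 0 := by
      simp [Complex.I_ne_zero, Complex.ofReal_eq_zero, h]
    have hint : ∀ T : ℝ, (∫ t in (0:ℝ)..T, (c * Complex.exp (Complex.I * ω * t)).re)
        = (c * ((Complex.exp (Complex.I * ω * T) - 1) / (Complex.I * ω))).re := by
      intro T
      have hii : IntervalIntegrable (fun t : ℝ => c * Complex.exp (Complex.I * ω * t))
          MeasureTheory.volume 0 T := by
        apply Continuous.intervalIntegrable
        continuity
      have := (Complex.reCLM).intervalIntegral_comp_comm hii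
      simp only [Complex.reCLM_apply] at this
      rw [this]
      congr 1
      rw [intervalIntegral.integral_const_mul, integral_exp_mul_complex hiw]
      simp [mul_div_assoc]
    unfold HasTimeAvg
    simp_rw [hint]
    have hb : Tendsto (fun T : ℝ => (1 / T) * (‖c‖ * 2 / ‖Complex.I * ω‖))
        atTop (nhds 0) := by
      simpa using tendsto_inv_atTop_zero.mul_const (‖c‖ * 2 / ‖Complex.I * ω‖)
    apply squeeze_zero_norm' _ hb
    filter_upwards [eventually_ge_atTop (0:ℝ)] with T hT
    have h1 : ‖Complex.exp (Complex.I * ω * T) - 1‖ ≤ 2 := by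
      calc ‖Complex.exp (Complex.I * ω * T) - 1‖
          ≤ ‖Complex.exp (Complex.I * ω * T)‖ + ‖(1:ℂ)‖ :=
            norm_sub_le _ _
        _ ≤ 2 := by
            rw [Complex.norm_exp]
            simp [Complex.mul_re, Complex.I_re, Complex.I_im]
            norm_num
    have h2 : |(c * ((Complex.exp (Complex.I * ω * T) - 1) / (Complex.I * ω))).re|
        ≤ ‖c‖ * 2 / ‖Complex.I * ω‖ := by
      calc |(c * ((Complex.exp (Complex.I * ω * T) - 1) / (Complex.I * ω))).re|
          ≤ ‖c * ((Complex.exp (Complex.I * ω * T) - 1) / (Complex.I * ω))‖ :=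
            Complex.abs_re_le_norm _
        _ = ‖c‖ * (‖Complex.exp (Complex.I * ω * T) - 1‖ / ‖Complex.I * ω‖) := by
            rw [norm_mul, norm_div]
        _ ≤ ‖c‖ * (2 / ‖Complex.I * ω‖) := by
            have hpos : 0 < ‖Complex.I * ω‖ := norm_pos_iff.mpr hiw
            gcongr
        _ = ‖c‖ * 2 / ‖Complex.I * ω‖ := by ring
    rw [Real.norm_eq_abs, abs_mul]
    calc |1 / T| * |(c * ((Complex.exp (Complex.I * ω * T) - 1) / (Complex.I * ω))).re|
        ≤ |1 / T| * (‖c‖ * 2 / ‖Complex.I * ω‖) := by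
          exact mul_le_mul_of_nonneg_left h2 (abs_nonneg _)
      _ = 1 / T * (‖c‖ * 2 / ‖Complex.I * ω‖) := by
          rw [abs_of_nonneg (by positivity)]

lemma hasTimeAvg_sum {ι : Type*} (s : Finset ι) (f : ι → ℝ → ℝ) (L : ι → ℝ)
    (hc : ∀ i, Continuous (f i)) (h : ∀ i ∈ s, HasTimeAvg (f i) (L i)) :
    HasTimeAvg (fun t => ∑ i ∈ s, f i t) (∑ i ∈ s, L i) := by
  unfold HasTimeAvg at *
  have key : ∀ T : ℝ, (1 / T) * ∫ t in (0:ℝ)..T, (∑ i ∈ s, f i t)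
      = ∑ i ∈ s, (1 / T) * ∫ t in (0:ℝ)..T, f i t := by
    intro T
    rw [intervalIntegral.integral_finset_sum (fun i _ => ((hc i).intervalIntegrable 0 T)),
      Finset.mul_sum]
  simp_rw [key]
  exact tendsto_finset_sum s h

lemma exp_split (x₁ x₂ x₃ x₄ : ℝ) (t : ℝ) :
    Complex.exp (Complex.I * ((x₁ - x₂ - x₃ + x₄ : ℝ) : ℂ) * t)
      = Complex.exp (Complex.I * (x₁:ℂ) * t) * Complex.exp (-(Complex.I * (x₂:ℂ) * t)) *
        Complex.exp (-(Complex.I * (x₃:ℂ) * t)) * Complex.exp (Complex.I * (x₄:ℂ) * t) := by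
  rw [← Complex.exp_add, ← Complex.exp_add, ← Complex.exp_add]
  congr 1
  push_cast
  ring

lemma term_eq (aj ak al am vjk vlm : ℂ) (xj xk xl xm t : ℝ) :
    (conj aj * Complex.exp (Complex.I * xj * t) * vjk *
        Complex.exp (-Complex.I * xk * t) * ak) *
      conj (conj al * Complex.exp (Complex.I * xl * t) * vlm *
        Complex.exp (-Complex.I * xm * t) * am)
    = (conj aj * vjk * ak * (al * conj vlm * conj am)) *
        Complex.exp (Complex.I * ((xj - xk - xl + xm : ℝ) : ℂ) * t) := by
  rw [exp_split]
  simp only [map_mul, Complex.conj_conj, ← Complex.exp_conj, Complex.conj_I,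
    Complex.conj_ofReal, map_neg, neg_mul, neg_neg]
  ring

lemma pair_cases {α : Type*} (j m k l : α) (h : (j ::ₘ {m} : Multiset α) = k ::ₘ {l}) :
    (j = k ∧ m = l) ∨ (j = l ∧ m = k) := by
  rcases Multiset.cons_eq_cons.mp h with ⟨h1, h2⟩ | ⟨hne, cs, h1, h2⟩
  · exact Or.inl ⟨h1, Multiset.singleton_inj.mp h2⟩
  · have hcs : cs = 0 := by
      have := congrArg Multiset.card h1
      simp at this
      exact this
    subst hcs
    rw [Multiset.cons_zero] at h1 h2
    exact Or.inr ⟨(Multiset.singleton_inj.mp h2).symm, Multiset.singleton_inj.mp h1⟩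

lemma multiset_pair {D : ℕ} (j m : Fin D) :
    Multiset.map ![j, m] (Finset.univ.val : Multiset (Fin 2)) = j ::ₘ {m} := by
  simp [Fin.univ_val_map, List.ofFn_succ, ← Multiset.cons_coe]

lemma ite_or_sub (P Q : Prop) [Decidable P] [Decidable Q] (x : ℝ) :
    (if P ∨ Q then x else 0)
      = (if P then x else 0) + (if Q then x else 0) - (if P ∧ Q then x else 0) := by
  by_cases hP : P <;> by_cases hQ : Q <;> simp [hP, hQ]

lemma conj_mul_self (u : ℂ) : conj u * u = ((‖u‖ ^ 2 : ℝ) : ℂ) := by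
  rw [mul_comm, Complex.mul_conj, Complex.normSq_eq_norm_sq]

end Aux

/-- **Time-averaged single-error fidelity.** In the eigenbasis of a Hermitian `H` with
nondegenerate spectrum `E` satisfying the second no-resonance condition, with `a_j = ⟨E_j|Ψ₀⟩`
the coefficients of a unit vector and `V` the matrix of an operator in the eigenbasis, the
infinite-time average of `|⟨Ψ(t)|V|Ψ(t)⟩|²` (where `|Ψ(t)⟩ = e^{-iHt}|Ψ₀⟩`) equals
`|tr(ρ_d V)|² + tr(ρ_d V ρ_d V†) − ∑_E |⟨E|V|E⟩|²|⟨E|Ψ₀⟩|⁴`. -/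
theorem timeAvg_single_error_fidelity {D : ℕ}
    (E : Fin D → ℝ) (hnd : Function.Injective E) (hE : NoResonance E 2)
    (a : Fin D → ℂ) (ha : ∑ j, (‖a j‖) ^ 2 = 1)
    (V : Matrix (Fin D) (Fin D) ℂ) :
    HasTimeAvg
      (fun t => (‖∑ j, ∑ k,
        conj (a j) * Complex.exp (Complex.I * (E j : ℂ) * (t : ℂ)) * V j k *
          Complex.exp (-Complex.I * (E k : ℂ) * (t : ℂ)) * a k‖) ^ 2)
      ((‖∑ j, ((‖a j‖) ^ 2 : ℂ) * V j j‖) ^ 2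
        + ∑ j, ∑ k, (‖a j‖) ^ 2 * (‖a k‖) ^ 2 *
            (‖V j k‖) ^ 2
        - ∑ j, (‖V j j‖) ^ 2 * (‖a j‖) ^ 4) := by
  classical
  set ω : ((Fin D × Fin D) × (Fin D × Fin D)) → ℝ := fun p => E p.1.1 - E p.1.2 - E p.2.1 + E p.2.2 with hω
  set c : ((Fin D × Fin D) × (Fin D × Fin D)) → ℂ := fun p =>
    conj (a p.1.1) * V p.1.1 p.1.2 * a p.1.2 *
      (a p.2.1 * conj (V p.2.1 p.2.2) * conj (a p.2.2)) with hc
  -- pointwise identity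
  have hpt : ∀ t : ℝ,
      (‖∑ j, ∑ k,
        conj (a j) * Complex.exp (Complex.I * (E j : ℂ) * (t : ℂ)) * V j k *
          Complex.exp (-Complex.I * (E k : ℂ) * (t : ℂ)) * a k‖) ^ 2
      = ∑ p : ((Fin D × Fin D) × (Fin D × Fin D)), (c p * Complex.exp (Complex.I * (ω p : ℂ) * (t : ℂ))).re := by
    intro t
    set F : ℂ := ∑ j, ∑ k,
      conj (a j) * Complex.exp (Complex.I * (E j : ℂ) * (t : ℂ)) * V j k *
        Complex.exp (-Complex.I * (E k : ℂ) * (t : ℂ)) * a k with hF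
    have habs : (‖F‖) ^ 2 = (F * conj F).re := by
      rw [Complex.sq_norm, Complex.mul_conj, Complex.ofReal_re]
    rw [habs]
    have hFp : F = ∑ p : Fin D × Fin D,
        conj (a p.1) * Complex.exp (Complex.I * (E p.1 : ℂ) * (t : ℂ)) * V p.1 p.2 *
          Complex.exp (-Complex.I * (E p.2 : ℂ) * (t : ℂ)) * a p.2 := by
      rw [hF, Fintype.sum_prod_type]
    rw [hFp, map_sum, Finset.sum_mul_sum, ← Complex.re_sum]
    congr 1
    conv_rhs => rw [Fintype.sum_prod_type]
    refine Finset.sum_congr rfl fun x _ => Finset.sum_congr rfl fun y _ => ?_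
    exact term_eq _ _ _ _ _ _ _ _ _ _ _
  -- continuity
  have hcont : ∀ p : ((Fin D × Fin D) × (Fin D × Fin D)), Continuous fun t : ℝ =>
      (c p * Complex.exp (Complex.I * (ω p : ℂ) * (t : ℂ))).re := by
    intro p
    apply Complex.continuous_re.comp
    exact continuous_const.mul (Complex.continuous_exp.comp
      (continuous_const.mul Complex.continuous_ofReal))
  -- apply the sum of averages
  have key := hasTimeAvg_sum (Finset.univ : Finset ((Fin D × Fin D) × (Fin D × Fin D)))
    (fun p t => (c p * Complex.exp (Complex.I * (ω p : ℂ) * (t : ℂ))).re)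
    (fun p => if ω p = 0 then (c p).re else 0) hcont
    (fun p _ => avg_exp (ω p) (c p))
  -- evaluate the limit
  have hsum : (∑ p : ((Fin D × Fin D) × (Fin D × Fin D)), if ω p = 0 then (c p).re else 0)
      = (‖∑ j, ((‖a j‖) ^ 2 : ℂ) * V j j‖) ^ 2
        + ∑ j, ∑ k, (‖a j‖) ^ 2 * (‖a k‖) ^ 2 *
            (‖V j k‖) ^ 2
        - ∑ j, (‖V j j‖) ^ 2 * (‖a j‖) ^ 4 := by
    have hcond : ∀ p : ((Fin D × Fin D) × (Fin D × Fin D)), (ω p = 0) ↔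
        ((p.1.1 = p.1.2 ∧ p.2.2 = p.2.1) ∨ (p.1.1 = p.2.1 ∧ p.2.2 = p.1.2)) := by
      rintro ⟨⟨j, k⟩, ⟨l, m⟩⟩
      constructor
      · intro h0
        have h0' : E j - E k - E l + E m = 0 := h0
        have h : E j + E m = E k + E l := by linarith
        have hmul := hE ![j, m] ![k, l] (by simpa [Fin.sum_univ_two] using h)
        rw [multiset_pair, multiset_pair] at hmul
        rcases pair_cases j m k l hmul with ⟨h1, h2⟩ | ⟨h1, h2⟩
        · exact Or.inl ⟨h1, h2⟩
        · exact Or.inr ⟨h1, h2⟩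
      · rintro (⟨h1, h2⟩ | ⟨h1, h2⟩)
        · show E j - E k - E l + E m = 0
          rw [show j = k from h1, show m = l from h2]; ring
        · show E j - E k - E l + E m = 0
          rw [show j = l from h1, show m = k from h2]; ring
    have step1 : (∑ p : ((Fin D × Fin D) × (Fin D × Fin D)), if ω p = 0 then (c p).re else 0)
        = ∑ p : ((Fin D × Fin D) × (Fin D × Fin D)), if ((p.1.1 = p.1.2 ∧ p.2.2 = p.2.1) ∨ (p.1.1 = p.2.1 ∧ p.2.2 = p.1.2))
            then (c p).re else 0 :=
      Finset.sum_congr rfl fun p _ => if_congr (hcond p) rfl rfl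
    rw [step1]
    have step2 : (∑ p : ((Fin D × Fin D) × (Fin D × Fin D)), if ((p.1.1 = p.1.2 ∧ p.2.2 = p.2.1) ∨ (p.1.1 = p.2.1 ∧ p.2.2 = p.1.2))
            then (c p).re else 0)
        = (∑ p : ((Fin D × Fin D) × (Fin D × Fin D)), if (p.1.1 = p.1.2 ∧ p.2.2 = p.2.1) then (c p).re else 0)
          + (∑ p : ((Fin D × Fin D) × (Fin D × Fin D)), if (p.1.1 = p.2.1 ∧ p.2.2 = p.1.2) then (c p).re else 0)
          - (∑ p : ((Fin D × Fin D) × (Fin D × Fin D)), if ((p.1.1 = p.1.2 ∧ p.2.2 = p.2.1) ∧ (p.1.1 = p.2.1 ∧ p.2.2 = p.1.2))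
              then (c p).re else 0) := by
      simp_rw [ite_or_sub]
      rw [Finset.sum_sub_distrib, Finset.sum_add_distrib]
    rw [step2]
    -- Sum A
    have hA : (∑ p : ((Fin D × Fin D) × (Fin D × Fin D)), if (p.1.1 = p.1.2 ∧ p.2.2 = p.2.1) then (c p).re else 0)
        = ∑ q : Fin D × Fin D, (c ((q.1, q.1), (q.2, q.2))).re := by
      rw [← Finset.sum_filter]
      have himg : (Finset.univ.filter (fun p : ((Fin D × Fin D) × (Fin D × Fin D)) => p.1.1 = p.1.2 ∧ p.2.2 = p.2.1))
          = Finset.image (fun q : Fin D × Fin D => ((q.1, q.1), (q.2, q.2))) Finset.univ := by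
        ext ⟨⟨j, k⟩, ⟨l, m⟩⟩
        simp only [Finset.mem_filter, Finset.mem_univ, true_and, Finset.mem_image,
          Prod.mk.injEq]
        constructor
        · rintro ⟨h1, h2⟩
          exact ⟨(j, l), ⟨⟨rfl, h1⟩, rfl, h2.symm⟩⟩
        · rintro ⟨q, ⟨e1, e2⟩, e3, e4⟩
          exact ⟨e1.symm.trans e2, e4.symm.trans e3⟩
      rw [himg, Finset.sum_image]
      intro x _ y _ hxy
      obtain ⟨x1, x2⟩ := x; obtain ⟨y1, y2⟩ := y
      simp only [Prod.mk.injEq] at hxy ⊢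
      exact ⟨hxy.1.1, hxy.2.1⟩
    -- Sum B
    have hB : (∑ p : ((Fin D × Fin D) × (Fin D × Fin D)), if (p.1.1 = p.2.1 ∧ p.2.2 = p.1.2) then (c p).re else 0)
        = ∑ q : Fin D × Fin D, (c ((q.1, q.2), (q.1, q.2))).re := by
      rw [← Finset.sum_filter]
      have himg : (Finset.univ.filter (fun p : ((Fin D × Fin D) × (Fin D × Fin D)) => p.1.1 = p.2.1 ∧ p.2.2 = p.1.2))
          = Finset.image (fun q : Fin D × Fin D => ((q.1, q.2), (q.1, q.2))) Finset.univ := by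
        ext ⟨⟨j, k⟩, ⟨l, m⟩⟩
        simp only [Finset.mem_filter, Finset.mem_univ, true_and, Finset.mem_image,
          Prod.mk.injEq]
        constructor
        · rintro ⟨h1, h2⟩
          exact ⟨(j, k), ⟨⟨rfl, rfl⟩, h1, h2.symm⟩⟩
        · rintro ⟨q, ⟨e1, e2⟩, e3, e4⟩
          exact ⟨e1.symm.trans e3, e4.symm.trans e2⟩
      rw [himg, Finset.sum_image]
      intro x _ y _ hxy
      obtain ⟨x1, x2⟩ := x; obtain ⟨y1, y2⟩ := y
      simp only [Prod.mk.injEq] at hxy ⊢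
      exact ⟨hxy.1.1, hxy.1.2⟩
    -- Sum C
    have hC : (∑ p : ((Fin D × Fin D) × (Fin D × Fin D)), if ((p.1.1 = p.1.2 ∧ p.2.2 = p.2.1) ∧ (p.1.1 = p.2.1 ∧ p.2.2 = p.1.2))
            then (c p).re else 0)
        = ∑ q : Fin D, (c ((q, q), (q, q))).re := by
      rw [← Finset.sum_filter]
      have himg : (Finset.univ.filter
            (fun p : ((Fin D × Fin D) × (Fin D × Fin D)) => (p.1.1 = p.1.2 ∧ p.2.2 = p.2.1) ∧ (p.1.1 = p.2.1 ∧ p.2.2 = p.1.2)))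
          = Finset.image (fun q : Fin D => ((q, q), (q, q))) Finset.univ := by
        ext ⟨⟨j, k⟩, ⟨l, m⟩⟩
        simp only [Finset.mem_filter, Finset.mem_univ, true_and, Finset.mem_image,
          Prod.mk.injEq]
        constructor
        · rintro ⟨⟨h1, h2⟩, h3, h4⟩
          exact ⟨j, ⟨rfl, h1⟩, h3, h1.trans h4.symm⟩
        · rintro ⟨x, ⟨e1, e2⟩, e3, e4⟩
          exact ⟨⟨e1.symm.trans e2, e4.symm.trans e3⟩, e1.symm.trans e3, e4.symm.trans e2⟩
      rw [himg, Finset.sum_image]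
      intro x _ y _ hxy
      simp only [Prod.mk.injEq] at hxy
      exact hxy.1.1
    rw [hA, hB, hC]
    have habs2 : ∀ u : ℂ, ((‖u‖) ^ 2 : ℂ) = conj u * u := by
      intro u
      rw [conj_mul_self]
      push_cast
      ring
    -- evaluate the three sums
    have hAval : (∑ q : Fin D × Fin D, (c ((q.1, q.1), (q.2, q.2))).re)
        = (‖∑ j, ((‖a j‖) ^ 2 : ℂ) * V j j‖) ^ 2 := by
      have hZ : (‖∑ j, ((‖a j‖) ^ 2 : ℂ) * V j j‖) ^ 2
          = ((∑ j, ((‖a j‖) ^ 2 : ℂ) * V j j)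
              * conj (∑ m, ((‖a m‖) ^ 2 : ℂ) * V m m)).re := by
        rw [Complex.sq_norm, Complex.mul_conj, Complex.ofReal_re]
      rw [hZ, map_sum, Finset.sum_mul_sum, Fintype.sum_prod_type]
      simp only [Complex.re_sum]
      refine Finset.sum_congr rfl fun j _ => Finset.sum_congr rfl fun m _ => ?_
      congr 1
      simp only [hc]
      rw [habs2 (a j), habs2 (a m)]
      simp only [map_mul, Complex.conj_conj]
      ring
    have hBval : (∑ q : Fin D × Fin D, (c ((q.1, q.2), (q.1, q.2))).re)
        = ∑ j, ∑ k, (‖a j‖) ^ 2 * (‖a k‖) ^ 2 *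
            (‖V j k‖) ^ 2 := by
      rw [Fintype.sum_prod_type]
      refine Finset.sum_congr rfl fun j _ => Finset.sum_congr rfl fun k _ => ?_
      simp only [hc]
      have hx : conj (a j) * V j k * a k * (a j * conj (V j k) * conj (a k))
          = (((‖a j‖) ^ 2 * (‖a k‖) ^ 2 *
              (‖V j k‖) ^ 2 : ℝ) : ℂ) := by
        calc conj (a j) * V j k * a k * (a j * conj (V j k) * conj (a k))
            = (conj (a j) * a j) * ((conj (a k)) * a k) * ((conj (V j k)) * V j k) := by ring
          _ = _ := by
              rw [conj_mul_self, conj_mul_self, conj_mul_self]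
              push_cast
              ring
      rw [hx, Complex.ofReal_re]
    have hCval : (∑ q : Fin D, (c ((q, q), (q, q))).re)
        = ∑ j, (‖V j j‖) ^ 2 * (‖a j‖) ^ 4 := by
      refine Finset.sum_congr rfl fun j _ => ?_
      simp only [hc]
      have hx : conj (a j) * V j j * a j * (a j * conj (V j j) * conj (a j))
          = (((‖V j j‖) ^ 2 * (‖a j‖) ^ 4 : ℝ) : ℂ) := by
        calc conj (a j) * V j j * a j * (a j * conj (V j j) * conj (a j))
            = (conj (a j) * a j) * ((conj (a j)) * a j) * ((conj (V j j)) * V j j) := by ring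
          _ = _ := by
              rw [conj_mul_self, conj_mul_self]
              push_cast
              ring
      rw [hx, Complex.ofReal_re]
    rw [hAval, hBval, hCval]
  have hfun : (fun t : ℝ => (‖∑ j, ∑ k,
        conj (a j) * Complex.exp (Complex.I * (E j : ℂ) * (t : ℂ)) * V j k *
          Complex.exp (-Complex.I * (E k : ℂ) * (t : ℂ)) * a k‖) ^ 2)
      = fun t : ℝ => ∑ p : ((Fin D × Fin D) × (Fin D × Fin D)), (c p * Complex.exp (Complex.I * (ω p : ℂ) * (t : ℂ))).re :=
    funext hpt
  rw [hfun, ← hsum]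
  exact key
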